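/- (Q fixed point for MFCG at frozen global distribution.) Under Assumption (Lip3), L_p^glob + L_p^loc < |𝒳|c_min, and assuming φ|𝒜|·(L_f^loc + (γ/(1−γ))L_p^loc‖f‖∞)/(|𝒳|c_min − L_p^loc) < 1 − γ, for every fixed μ ∈ Δ(𝒳) the map Q ↦ B_{μ, μ'*_{Q,μ}}Q maps the ball 𝔅 = {Q : ‖Q‖∞ ≤ ‖f‖∞/(1−γ)} into itself and satisfies, for Q, Q' ∈ 𝔅, ‖B_{μ,μ'*_{Q,μ}}Q − B_{μ,μ'*_{Q',μ}}Q'‖∞ ≤ k‖Q − Q'‖∞ with k = γ + (L_f^loc + (γ/(1−γ))L_p^loc‖f‖∞)·φ|𝒜|/(|𝒳|c_min − L_p^loc) < 1; consequently it has a unique fixed point Q*_μ in 𝔅. -/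

import Mathlib

open Finset Filter
open scoped Classical

noncomputable section

variable {X A : Type*}

/-- A probability vector on a finite set. -/
def IsProb [Fintype X] (μ : X → ℝ) : Prop := (∀ x, 0 ≤ μ x) ∧ ∑ x, μ x = 1

/-- ℓ¹ norm of a signed measure / vector on a finite set. -/
def l1 [Fintype X] (μ : X → ℝ) : ℝ := ∑ x, |μ x|

/-- Sup norm of a Q-table. -/
def supQ [Fintype X] [Fintype A] [Nonempty X] [Nonempty A] (Q : X → A → ℝ) : ℝ :=
  Finset.univ.sup' Finset.univ_nonempty (fun xa : X × A => |Q xa.1 xa.2|)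

/-- Minimum of a row of a Q-table (minimum over actions). -/
def minRow [Fintype A] [Nonempty A] (q : A → ℝ) : ℝ :=
  Finset.univ.inf' Finset.univ_nonempty q

/-- The soft-min distribution over actions with parameter φ. -/
def softmin [Fintype A] (φ : ℝ) (z : A → ℝ) (a : A) : ℝ :=
  Real.exp (-φ * z a) / ∑ a', Real.exp (-φ * z a')

/-- The argmin_e policy: uniform over the minimizers, zero elsewhere. -/
def argminE [Fintype A] [Nonempty A] (q : A → ℝ) (a : A) : ℝ :=
  if q a = minRow q then (1 : ℝ) / (Finset.univ.filter fun a' => q a' = minRow q).card else 0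

/-- (P^{π,μ,μ'} ν)(x) = ∑_{x₁} ν(x₁) ∑_a π(a|x₁) p(x|x₁,a,μ,μ') for a kernel with a
global distribution μ and a local distribution μ'. -/
def Ppush3 [Fintype X] [Fintype A] (p : X → A → (X → ℝ) → (X → ℝ) → X → ℝ)
    (π : X → A → ℝ) (μ μ' ν : X → ℝ) (x : X) : ℝ :=
  ∑ x1, ν x1 * ∑ a, π x1 a * p x1 a μ μ' x

/-- The Bellman operator (B_{μ,μ'} Q)(x,a) = f(x,a,μ,μ') + γ ∑_{x'} p(x'|x,a,μ,μ') min_{a'} Q(x',a'). -/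
def bell3 [Fintype X] [Fintype A] [Nonempty A]
    (f : X → A → (X → ℝ) → (X → ℝ) → ℝ) (p : X → A → (X → ℝ) → (X → ℝ) → X → ℝ)
    (γ : ℝ) (μ μ' : X → ℝ) (Q : X → A → ℝ) (x : X) (a : A) : ℝ :=
  f x a μ μ' + γ * ∑ x', p x a μ μ' x' * minRow (Q x')

/-! ### Auxiliary lemmas -/

section Softmin
variable [Fintype A] [Nonempty A]

lemma softden_pos (φ : ℝ) (z : A → ℝ) : 0 < ∑ a', Real.exp (-φ * z a') :=
  Finset.sum_pos (fun _ _ => Real.exp_pos _) univ_nonempty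

lemma softmin_nonneg (φ : ℝ) (z : A → ℝ) (a : A) : 0 ≤ softmin φ z a :=
  div_nonneg (Real.exp_pos _).le (softden_pos φ z).le

lemma softmin_sum (φ : ℝ) (z : A → ℝ) : ∑ a, softmin φ z a = 1 := by
  simp only [softmin, ← Finset.sum_div]
  exact div_self (softden_pos φ z).ne'

lemma softmin_deriv_bound (φ M : ℝ) (hφ : 0 < φ) (hM : 0 ≤ M) (N : A → ℝ)
    (hN : ∀ b, 0 < N b) (w : A → ℝ) (a : A) (hw : ∀ b, |w a - w b| ≤ 2 * M) :
    |(N a * (-φ * w a) * (∑ b, N b) - N a * ∑ b, N b * (-φ * w b)) / (∑ b, N b)^2|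
      ≤ φ * M := by
  set D := ∑ b, N b with hD
  have hDpos : 0 < D := Finset.sum_pos (fun b _ => hN b) univ_nonempty
  have hnum : N a * (-φ * w a) * D - N a * ∑ b, N b * (-φ * w b)
      = -φ * (N a * ∑ b, N b * (w a - w b)) := by
    rw [hD, Finset.mul_sum, Finset.mul_sum, Finset.mul_sum, Finset.mul_sum,
      ← Finset.sum_sub_distrib]
    congr 1; ext b; ring
  have hsum : |∑ b, N b * (w a - w b)| ≤ 2 * M * (D - N a) := by
    calc |∑ b, N b * (w a - w b)| ≤ ∑ b, |N b * (w a - w b)| := Finset.abs_sum_le_sum_abs _ _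
    _ = ∑ b, N b * |w a - w b| := by
        congr 1; ext b; rw [abs_mul, abs_of_pos (hN b)]
    _ = ∑ b ∈ univ.erase a, N b * |w a - w b| := by
        rw [← Finset.sum_erase_add _ _ (mem_univ a)]; simp
    _ ≤ ∑ b ∈ univ.erase a, N b * (2 * M) := by
        apply Finset.sum_le_sum; intro b _
        exact mul_le_mul_of_nonneg_left (hw b) (hN b).le
    _ = 2 * M * (D - N a) := by
        rw [← Finset.sum_mul, hD, ← Finset.sum_erase_add _ _ (mem_univ a)]; ring
  rw [hnum, abs_div, abs_mul, abs_neg, abs_of_pos hφ, abs_mul, abs_of_pos (hN a),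
    abs_of_pos (pow_pos hDpos 2)]
  rw [div_le_iff₀ (pow_pos hDpos 2)]
  have h1 : N a * |∑ b, N b * (w a - w b)| ≤ N a * (2 * M * (D - N a)) :=
    mul_le_mul_of_nonneg_left hsum (hN a).le
  have hNa : 0 < N a := hN a
  have hNaD : N a ≤ D := by
    rw [hD, ← Finset.sum_erase_add _ _ (mem_univ a)]
    have : 0 ≤ ∑ b ∈ univ.erase a, N b := Finset.sum_nonneg fun b _ => (hN b).le
    linarith
  have h2 : N a * (2 * M * (D - N a)) ≤ M * D ^ 2 := by
    nlinarith [mul_nonneg hM (sq_nonneg (2 * N a - D))]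
  nlinarith [mul_le_mul_of_nonneg_left (le_trans h1 h2) hφ.le]

lemma softmin_lipschitz (φ : ℝ) (hφ : 0 < φ) (z z' : A → ℝ) (M : ℝ) (hM : 0 ≤ M)
    (h : ∀ a, |z a - z' a| ≤ M) (a : A) :
    |softmin φ z a - softmin φ z' a| ≤ φ * M := by
  set w : A → ℝ := fun b => z' b - z b with hw
  set g : ℝ → ℝ := fun t => softmin φ (fun b => z b + t * w b) a with hg
  set g' : ℝ → ℝ := fun t =>
      (Real.exp (-φ * (z a + t * w a)) * (-φ * w a) * (∑ b, Real.exp (-φ * (z b + t * w b)))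
        - Real.exp (-φ * (z a + t * w a)) * ∑ b, Real.exp (-φ * (z b + t * w b)) * (-φ * w b))
        / (∑ b, Real.exp (-φ * (z b + t * w b)))^2 with hg'
  have key : ∀ t : ℝ, HasDerivAt g (g' t) t := by
    intro t
    have hN : ∀ b : A, HasDerivAt (fun t : ℝ => Real.exp (-φ * (z b + t * w b)))
        (Real.exp (-φ * (z b + t * w b)) * (-φ * w b)) t := by
      intro b
      have h1 : HasDerivAt (fun t : ℝ => -φ * (z b + t * w b)) (-φ * w b) t := by
        have := ((hasDerivAt_id t).const_mul (w b)).const_add (z b)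
        have := this.const_mul (-φ)
        simpa [mul_comm] using this
      simpa [mul_comm] using h1.exp
    have hD : HasDerivAt (fun t : ℝ => ∑ b, Real.exp (-φ * (z b + t * w b)))
        (∑ b, Real.exp (-φ * (z b + t * w b)) * (-φ * w b)) t :=
      HasDerivAt.fun_sum (fun b _ => hN b)
    have := (hN a).fun_div hD
      (Finset.sum_pos (fun b _ => Real.exp_pos _) univ_nonempty).ne'
    simpa [g, hg', softmin] using this
  have hbound : ∀ t : ℝ, |g' t| ≤ φ * M := by
    intro t
    apply softmin_deriv_bound φ M hφ hM _ (fun b => Real.exp_pos _) w a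
    intro b
    have h0 : |w a - w b| = |(z' a - z a) - (z' b - z b)| := rfl
    rw [h0]
    calc |(z' a - z a) - (z' b - z b)| ≤ |z' a - z a| + |z' b - z b| := abs_sub _ _
    _ ≤ M + M := add_le_add (by rw [abs_sub_comm]; exact h a) (by rw [abs_sub_comm]; exact h b)
    _ = 2 * M := by ring
  have hmvt := Convex.norm_image_sub_le_of_norm_hasDerivWithin_le
    (f := g) (f' := g') (s := Set.univ) (C := φ * M)
    (fun t _ => (key t).hasDerivWithinAt)
    (fun t _ => by simpa using hbound t) convex_univ (Set.mem_univ (0:ℝ)) (Set.mem_univ (1:ℝ))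
  have hg0 : g 0 = softmin φ z a := by simp [hg]
  have hg1 : g 1 = softmin φ z' a := by simp [hg, hw]
  rw [hg0, hg1] at hmvt
  simpa [abs_sub_comm] using hmvt

lemma softmin_l1 (φ : ℝ) (hφ : 0 < φ) (z z' : A → ℝ) (M : ℝ) (hM : 0 ≤ M)
    (h : ∀ a, |z a - z' a| ≤ M) :
    ∑ a, |softmin φ z a - softmin φ z' a| ≤ φ * (Fintype.card A : ℝ) * M := by
  calc ∑ a, |softmin φ z a - softmin φ z' a| ≤ ∑ _a : A, φ * M :=
        Finset.sum_le_sum fun a _ => softmin_lipschitz φ hφ z z' M hM h a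
  _ = φ * (Fintype.card A : ℝ) * M := by
      simp [Finset.sum_const, Finset.card_univ]; ring

end Softmin

section Aux
variable [Fintype X] [Fintype A] [Nonempty X] [Nonempty A]

lemma abs_le_supQ (Q : X → A → ℝ) (x : X) (a : A) : |Q x a| ≤ supQ Q :=
  Finset.le_sup' (f := fun xa : X × A => |Q xa.1 xa.2|) (mem_univ ((x, a) : X × A))

lemma supQ_le_iff (Q : X → A → ℝ) (s : ℝ) : supQ Q ≤ s ↔ ∀ x a, |Q x a| ≤ s := by
  rw [supQ, Finset.sup'_le_iff]
  exact ⟨fun h x a => h (x, a) (mem_univ _), fun h xa _ => h xa.1 xa.2⟩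

lemma supQ_nonneg (Q : X → A → ℝ) : 0 ≤ supQ Q :=
  le_trans (abs_nonneg _) (abs_le_supQ Q (Classical.arbitrary X) (Classical.arbitrary A))

lemma minRow_le (q : A → ℝ) (a : A) : minRow q ≤ q a :=
  Finset.inf'_le _ (mem_univ a)

lemma abs_minRow_le (q : A → ℝ) (M : ℝ) (h : ∀ a, |q a| ≤ M) : |minRow q| ≤ M := by
  obtain ⟨a, -, ha⟩ := Finset.exists_mem_eq_inf' (univ_nonempty) q
  have h3 : minRow q = q a := ha
  rw [h3]; exact h a

lemma abs_minRow_sub_le (q q' : A → ℝ) (M : ℝ) (h : ∀ a, |q a - q' a| ≤ M) :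
    |minRow q - minRow q'| ≤ M := by
  rw [abs_sub_le_iff]
  constructor
  · obtain ⟨a, -, ha⟩ := Finset.exists_mem_eq_inf' (univ_nonempty) q'
    have h1 : minRow q ≤ q a := minRow_le q a
    have h2 : q a - q' a ≤ M := (abs_le.1 (h a)).2
    have h3 : minRow q' = q' a := ha
    linarith
  · obtain ⟨a, -, ha⟩ := Finset.exists_mem_eq_inf' (univ_nonempty) q
    have h1 : minRow q' ≤ q' a := minRow_le q' a
    have h2 : -(M) ≤ q a - q' a := (abs_le.1 (h a)).1
    have h3 : minRow q = q a := ha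
    linarith

/-- Dobrushin-type contraction for kernels bounded below by `cmin`. -/
lemma kernel_contract (cmin : ℝ) (ν ν' : X → ℝ) (hν : IsProb ν) (hν' : IsProb ν')
    (K : X → X → ℝ) (hc : ∀ x x', cmin ≤ K x x') (hrow : ∀ x, ∑ x', K x x' = 1) :
    ∑ x', |∑ x, (ν x - ν' x) * K x x'|
      ≤ (1 - (Fintype.card X : ℝ) * cmin) * ∑ x, |ν x - ν' x| := by
  have hz : ∑ x, (ν x - ν' x) = 0 := by
    rw [Finset.sum_sub_distrib, hν.2, hν'.2]; ring
  have hrew : ∀ x', ∑ x, (ν x - ν' x) * K x x' = ∑ x, (ν x - ν' x) * (K x x' - cmin) := by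
    intro x'
    simp only [mul_sub, Finset.sum_sub_distrib, ← Finset.sum_mul, hz, zero_mul, sub_zero]
  calc ∑ x', |∑ x, (ν x - ν' x) * K x x'|
      ≤ ∑ x', ∑ x, |ν x - ν' x| * (K x x' - cmin) := by
        refine Finset.sum_le_sum fun x' _ => ?_
        rw [hrew]
        refine (Finset.abs_sum_le_sum_abs _ _).trans (Finset.sum_le_sum fun x _ => ?_)
        rw [abs_mul, abs_of_nonneg (sub_nonneg.2 (hc x x'))]
    _ = ∑ x, |ν x - ν' x| * (1 - (Fintype.card X : ℝ) * cmin) := by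
        rw [Finset.sum_comm]
        refine Finset.sum_congr rfl fun x _ => ?_
        rw [← Finset.mul_sum, Finset.sum_sub_distrib, hrow, Finset.sum_const, card_univ,
          nsmul_eq_mul]
    _ = (1 - (Fintype.card X : ℝ) * cmin) * ∑ x, |ν x - ν' x| := by
        rw [← Finset.sum_mul, mul_comm]

lemma kernel_push_diff (ν : X → ℝ) (hν : IsProb ν) (K K' : X → X → ℝ) (ε : ℝ)
    (hrow : ∀ x, ∑ x', |K x x' - K' x x'| ≤ ε) :
    ∑ x', |∑ x, ν x * (K x x' - K' x x')| ≤ ε := by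
  calc ∑ x', |∑ x, ν x * (K x x' - K' x x')|
      ≤ ∑ x', ∑ x, ν x * |K x x' - K' x x'| := by
        refine Finset.sum_le_sum fun x' _ => ?_
        refine (Finset.abs_sum_le_sum_abs _ _).trans (Finset.sum_le_sum fun x _ => ?_)
        rw [abs_mul, abs_of_nonneg (hν.1 x)]
    _ = ∑ x, ν x * ∑ x', |K x x' - K' x x'| := by
        rw [Finset.sum_comm]
        exact Finset.sum_congr rfl fun x _ => (Finset.mul_sum _ _ _).symm
    _ ≤ ∑ x, ν x * ε :=
        Finset.sum_le_sum fun x _ => mul_le_mul_of_nonneg_left (hrow x) (hν.1 x)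
    _ = ε := by rw [← Finset.sum_mul, hν.2, one_mul]

end Aux

/-- Q fixed point for MFCG at a frozen global distribution μ: the map
Q ↦ B_{μ,μ'*_{Q,μ}} Q maps the ball ‖Q‖∞ ≤ ‖f‖∞/(1−γ) into itself and is a strict
contraction there with constant
k = γ + (L_f^loc + (γ/(1−γ))L_p^loc‖f‖∞)·φ|𝒜|/(|𝒳|c_min − L_p^loc) < 1; hence it has a
unique fixed point Q*_μ in the ball. -/
theorem mfcg_Q_fixed_point [Fintype X] [Fintype A] [Nonempty X] [Nonempty A]
    (γ : ℝ) (hγ0 : 0 < γ) (hγ1 : γ < 1)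
    (f : X → A → (X → ℝ) → (X → ℝ) → ℝ) (fnorm : ℝ)
    (hf : ∀ x a μ μ', IsProb μ → IsProb μ' → |f x a μ μ'| ≤ fnorm)
    (p : X → A → (X → ℝ) → (X → ℝ) → X → ℝ)
    (hp0 : ∀ x a μ μ' x', IsProb μ → IsProb μ' → 0 ≤ p x a μ μ' x')
    (hp1 : ∀ x a μ μ', IsProb μ → IsProb μ' → ∑ x', p x a μ μ' x' = 1)
    (cmin : ℝ) (hcmin0 : 0 ≤ cmin)
    (hcmin : ∀ x a μ μ' x', IsProb μ → IsProb μ' → cmin ≤ p x a μ μ' x')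
    (Lfglob Lfloc Lpglob Lploc : ℝ)
    (hLfglob0 : 0 ≤ Lfglob) (hLfloc0 : 0 ≤ Lfloc) (hLpglob0 : 0 ≤ Lpglob) (hLploc0 : 0 ≤ Lploc)
    (hLfglob : ∀ x a μ μ₁ μ', IsProb μ → IsProb μ₁ → IsProb μ' →
      |f x a μ μ' - f x a μ₁ μ'| ≤ Lfglob * l1 (fun y => μ y - μ₁ y))
    (hLfloc : ∀ x a μ μ' μ'₁, IsProb μ → IsProb μ' → IsProb μ'₁ →
      |f x a μ μ' - f x a μ μ'₁| ≤ Lfloc * l1 (fun y => μ' y - μ'₁ y))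
    (hLpglob : ∀ x a μ μ₁ μ', IsProb μ → IsProb μ₁ → IsProb μ' →
      ∑ x', |p x a μ μ' x' - p x a μ₁ μ' x'| ≤ Lpglob * l1 (fun y => μ y - μ₁ y))
    (hLploc : ∀ x a μ μ' μ'₁, IsProb μ → IsProb μ' → IsProb μ'₁ →
      ∑ x', |p x a μ μ' x' - p x a μ μ'₁ x'| ≤ Lploc * l1 (fun y => μ' y - μ'₁ y))
    (hLpc : Lpglob + Lploc < (Fintype.card X : ℝ) * cmin)
    (φ : ℝ) (hφ0 : 0 < φ)
    (hφsmall : φ * (Fintype.card A : ℝ) * (Lfloc + (γ / (1 - γ)) * Lploc * fnorm)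
        / ((Fintype.card X : ℝ) * cmin - Lploc) < 1 - γ)
    -- μ'*_{Q,μ} : the unique fixed point of μ' ↦ μ'P^{Q,μ,μ'}
    (mups : (X → A → ℝ) → (X → ℝ) → X → ℝ)
    (hmups : ∀ (Q : X → A → ℝ) (μ : X → ℝ), IsProb μ →
      IsProb (mups Q μ) ∧
        Ppush3 p (fun x1 => softmin φ (Q x1)) μ (mups Q μ) (mups Q μ) = mups Q μ)
    -- the contraction constant
    (k : ℝ)
    (hkdef : k = γ + (Lfloc + (γ / (1 - γ)) * Lploc * fnorm) * φ * (Fintype.card A : ℝ)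
        / ((Fintype.card X : ℝ) * cmin - Lploc)) :
    (∀ (μ : X → ℝ), IsProb μ → ∀ Q : X → A → ℝ, supQ Q ≤ fnorm / (1 - γ) →
        supQ (bell3 f p γ μ (mups Q μ) Q) ≤ fnorm / (1 - γ))
    ∧ (∀ (μ : X → ℝ), IsProb μ → ∀ Q Q' : X → A → ℝ,
        supQ Q ≤ fnorm / (1 - γ) → supQ Q' ≤ fnorm / (1 - γ) →
        supQ (fun x a => bell3 f p γ μ (mups Q μ) Q x a - bell3 f p γ μ (mups Q' μ) Q' x a)
          ≤ k * supQ (fun x a => Q x a - Q' x a))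
    ∧ k < 1
    ∧ (∀ (μ : X → ℝ), IsProb μ →
        ∃! Qs : X → A → ℝ, supQ Qs ≤ fnorm / (1 - γ) ∧
          bell3 f p γ μ (mups Qs μ) Qs = Qs) := by
  have h1γ : 0 < 1 - γ := by linarith
  have hden : 0 < (Fintype.card X : ℝ) * cmin - Lploc := by linarith
  -- fnorm is nonnegative
  have hfnorm0 : 0 ≤ fnorm := by
    have hcard : 0 < (Fintype.card X : ℝ) := by
      exact_mod_cast Fintype.card_pos
    have huni : IsProb (fun _ : X => 1 / (Fintype.card X : ℝ)) := by
      constructor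
      · intro x; positivity
      · rw [Finset.sum_const, card_univ, nsmul_eq_mul]
        field_simp
    exact le_trans (abs_nonneg _)
      (hf (Classical.arbitrary X) (Classical.arbitrary A) _ _ huni huni)
  have hR0 : 0 ≤ fnorm / (1 - γ) := div_nonneg hfnorm0 h1γ.le
  have hc0 : 0 ≤ Lfloc + γ / (1 - γ) * Lploc * fnorm :=
    add_nonneg hLfloc0 (mul_nonneg (mul_nonneg (div_nonneg hγ0.le h1γ.le) hLploc0) hfnorm0)
  have hfrac :
      (Lfloc + γ / (1 - γ) * Lploc * fnorm) * φ * (Fintype.card A : ℝ)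
          / ((Fintype.card X : ℝ) * cmin - Lploc)
        = φ * (Fintype.card A : ℝ) * (Lfloc + γ / (1 - γ) * Lploc * fnorm)
          / ((Fintype.card X : ℝ) * cmin - Lploc) := by ring
  have hk1 : k < 1 := by
    rw [hkdef, hfrac]; linarith
  have hk0 : 0 ≤ k := by
    have : 0 ≤ (Lfloc + γ / (1 - γ) * Lploc * fnorm) * φ * (Fintype.card A : ℝ)
        / ((Fintype.card X : ℝ) * cmin - Lploc) :=
      div_nonneg (mul_nonneg (mul_nonneg hc0 hφ0.le) (Nat.cast_nonneg _)) hden.le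
    rw [hkdef]; linarith
  -- Part 1 : the ball is mapped into itself
  have part1 : ∀ (μ : X → ℝ), IsProb μ → ∀ Q : X → A → ℝ, supQ Q ≤ fnorm / (1 - γ) →
      supQ (bell3 f p γ μ (mups Q μ) Q) ≤ fnorm / (1 - γ) := by
    intro μ hμ Q hQ
    obtain ⟨hν, -⟩ := hmups Q μ hμ
    rw [supQ_le_iff]
    intro x a
    have h2 : |∑ x', p x a μ (mups Q μ) x' * minRow (Q x')| ≤ fnorm / (1 - γ) := by
      refine (Finset.abs_sum_le_sum_abs _ _).trans ?_
      calc ∑ x', |p x a μ (mups Q μ) x' * minRow (Q x')|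
          ≤ ∑ x', p x a μ (mups Q μ) x' * (fnorm / (1 - γ)) := by
            refine Finset.sum_le_sum fun x' _ => ?_
            rw [abs_mul, abs_of_nonneg (hp0 x a μ _ x' hμ hν)]
            refine mul_le_mul_of_nonneg_left ?_ (hp0 x a μ _ x' hμ hν)
            exact abs_minRow_le _ _ fun a' => (abs_le_supQ Q x' a').trans hQ
        _ = fnorm / (1 - γ) := by rw [← Finset.sum_mul, hp1 x a μ _ hμ hν, one_mul]
    have h1 : |f x a μ (mups Q μ)| ≤ fnorm := hf x a μ _ hμ hν
    have key : fnorm + γ * (fnorm / (1 - γ)) = fnorm / (1 - γ) := by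
      field_simp; ring
    calc |bell3 f p γ μ (mups Q μ) Q x a|
        ≤ |f x a μ (mups Q μ)| + |γ * ∑ x', p x a μ (mups Q μ) x' * minRow (Q x')| :=
          abs_add_le _ _
      _ ≤ fnorm + γ * (fnorm / (1 - γ)) := by
          rw [abs_mul, abs_of_pos hγ0]
          exact add_le_add h1 (mul_le_mul_of_nonneg_left h2 hγ0.le)
      _ = fnorm / (1 - γ) := key
  -- ℓ¹ bound between the local fixed points of two Q-tables
  have Gbound : ∀ (μ : X → ℝ), IsProb μ → ∀ Q Q' : X → A → ℝ,
      l1 (fun y => mups Q μ y - mups Q' μ y)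
        ≤ φ * (Fintype.card A : ℝ) * supQ (fun x a => Q x a - Q' x a)
            / ((Fintype.card X : ℝ) * cmin - Lploc) := by
    intro μ hμ Q Q'
    obtain ⟨hν, hfix⟩ := hmups Q μ hμ
    obtain ⟨hν', hfix'⟩ := hmups Q' μ hμ
    set ν := mups Q μ with hνdef
    set ν' := mups Q' μ with hν'def
    set d := supQ (fun x a => Q x a - Q' x a) with hd
    have hd0 : 0 ≤ d := supQ_nonneg _
    set K1 : X → X → ℝ := fun x x' => ∑ a, softmin φ (Q x) a * p x a μ ν x' with hK1
    set K2 : X → X → ℝ := fun x x' => ∑ a, softmin φ (Q x) a * p x a μ ν' x' with hK2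
    set K3 : X → X → ℝ := fun x x' => ∑ a, softmin φ (Q' x) a * p x a μ ν' x' with hK3
    have hfix1 : ∀ x', ∑ x, ν x * K1 x x' = ν x' := fun x' => congrFun hfix x'
    have hfix3 : ∀ x', ∑ x, ν' x * K3 x x' = ν' x' := fun x' => congrFun hfix' x'
    set L := l1 (fun y => ν y - ν' y) with hL
    have split : ∀ x', ν x' - ν' x'
        = (∑ x, (ν x - ν' x) * K1 x x') + ((∑ x, ν' x * (K1 x x' - K2 x x'))
          + (∑ x, ν' x * (K2 x x' - K3 x x'))) := by
      intro x'
      rw [← hfix1 x', ← hfix3 x', ← Finset.sum_add_distrib, ← Finset.sum_add_distrib,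
        ← Finset.sum_sub_distrib]
      exact Finset.sum_congr rfl fun x _ => by ring
    -- bound on T1
    have hT1 : ∑ x', |∑ x, (ν x - ν' x) * K1 x x'|
        ≤ (1 - (Fintype.card X : ℝ) * cmin) * L := by
      refine kernel_contract cmin ν ν' hν hν' K1 ?_ ?_
      · intro x x'
        have : cmin = ∑ a, softmin φ (Q x) a * cmin := by
          rw [← Finset.sum_mul, softmin_sum, one_mul]
        rw [this]
        exact Finset.sum_le_sum fun a _ =>
          mul_le_mul_of_nonneg_left (hcmin x a μ ν x' hμ hν) (softmin_nonneg φ _ a)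
      · intro x
        rw [Finset.sum_comm]
        calc ∑ a, ∑ x', softmin φ (Q x) a * p x a μ ν x'
            = ∑ a, softmin φ (Q x) a * ∑ x', p x a μ ν x' :=
              Finset.sum_congr rfl fun a _ => (Finset.mul_sum _ _ _).symm
          _ = ∑ a, softmin φ (Q x) a := by
              refine Finset.sum_congr rfl fun a _ => ?_
              rw [hp1 x a μ ν hμ hν, mul_one]
          _ = 1 := softmin_sum φ _
    -- bound on T2
    have hT2 : ∑ x', |∑ x, ν' x * (K1 x x' - K2 x x')| ≤ Lploc * L := by
      refine kernel_push_diff ν' hν' K1 K2 (Lploc * L) ?_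
      intro x
      have hdiff : ∀ x', K1 x x' - K2 x x'
          = ∑ a, softmin φ (Q x) a * (p x a μ ν x' - p x a μ ν' x') := by
        intro x'
        rw [hK1, hK2, ← Finset.sum_sub_distrib]
        exact Finset.sum_congr rfl fun a _ => by ring
      calc ∑ x', |K1 x x' - K2 x x'|
          ≤ ∑ x', ∑ a, softmin φ (Q x) a * |p x a μ ν x' - p x a μ ν' x'| := by
            refine Finset.sum_le_sum fun x' _ => ?_
            rw [hdiff x']
            refine (Finset.abs_sum_le_sum_abs _ _).trans (Finset.sum_le_sum fun a _ => ?_)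
            rw [abs_mul, abs_of_nonneg (softmin_nonneg φ _ a)]
        _ = ∑ a, softmin φ (Q x) a * ∑ x', |p x a μ ν x' - p x a μ ν' x'| := by
            rw [Finset.sum_comm]
            exact Finset.sum_congr rfl fun a _ => (Finset.mul_sum _ _ _).symm
        _ ≤ ∑ a, softmin φ (Q x) a * (Lploc * L) :=
            Finset.sum_le_sum fun a _ => mul_le_mul_of_nonneg_left
              (hLploc x a μ ν ν' hμ hν hν') (softmin_nonneg φ _ a)
        _ = Lploc * L := by rw [← Finset.sum_mul, softmin_sum, one_mul]
    -- bound on T3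
    have hT3 : ∑ x', |∑ x, ν' x * (K2 x x' - K3 x x')|
        ≤ φ * (Fintype.card A : ℝ) * d := by
      refine kernel_push_diff ν' hν' K2 K3 _ ?_
      intro x
      have hdiff : ∀ x', K2 x x' - K3 x x'
          = ∑ a, (softmin φ (Q x) a - softmin φ (Q' x) a) * p x a μ ν' x' := by
        intro x'
        rw [hK2, hK3, ← Finset.sum_sub_distrib]
        exact Finset.sum_congr rfl fun a _ => by ring
      calc ∑ x', |K2 x x' - K3 x x'|
          ≤ ∑ x', ∑ a, |softmin φ (Q x) a - softmin φ (Q' x) a| * p x a μ ν' x' := by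
            refine Finset.sum_le_sum fun x' _ => ?_
            rw [hdiff x']
            refine (Finset.abs_sum_le_sum_abs _ _).trans (Finset.sum_le_sum fun a _ => ?_)
            rw [abs_mul, abs_of_nonneg (hp0 x a μ ν' x' hμ hν')]
        _ = ∑ a, |softmin φ (Q x) a - softmin φ (Q' x) a| * ∑ x', p x a μ ν' x' := by
            rw [Finset.sum_comm]
            exact Finset.sum_congr rfl fun a _ => (Finset.mul_sum _ _ _).symm
        _ = ∑ a, |softmin φ (Q x) a - softmin φ (Q' x) a| := by
            refine Finset.sum_congr rfl fun a _ => ?_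
            rw [hp1 x a μ ν' hμ hν', mul_one]
        _ ≤ φ * (Fintype.card A : ℝ) * d :=
            softmin_l1 φ hφ0 _ _ d hd0 fun a =>
              abs_le_supQ (fun x a => Q x a - Q' x a) x a
    -- combine
    have hcomb : L ≤ (1 - (Fintype.card X : ℝ) * cmin) * L + Lploc * L
        + φ * (Fintype.card A : ℝ) * d := by
      calc L = ∑ x', |ν x' - ν' x'| := by rw [hL, l1]
        _ ≤ ∑ x', (|∑ x, (ν x - ν' x) * K1 x x'| + (|∑ x, ν' x * (K1 x x' - K2 x x')|
            + |∑ x, ν' x * (K2 x x' - K3 x x')|)) := by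
            refine Finset.sum_le_sum fun x' _ => ?_
            rw [split x']
            exact (abs_add_le _ _).trans (add_le_add_right (abs_add_le _ _) _)
        _ = (∑ x', |∑ x, (ν x - ν' x) * K1 x x'|)
            + ((∑ x', |∑ x, ν' x * (K1 x x' - K2 x x')|)
            + (∑ x', |∑ x, ν' x * (K2 x x' - K3 x x')|)) := by
            rw [Finset.sum_add_distrib, Finset.sum_add_distrib]
        _ ≤ (1 - (Fintype.card X : ℝ) * cmin) * L + (Lploc * L
            + φ * (Fintype.card A : ℝ) * d) := by
            exact add_le_add hT1 (add_le_add hT2 hT3)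
        _ = (1 - (Fintype.card X : ℝ) * cmin) * L + Lploc * L
            + φ * (Fintype.card A : ℝ) * d := by ring
    rw [le_div_iff₀ hden]
    nlinarith [hcomb]
  -- Part 2 : contraction estimate
  have part2 : ∀ (μ : X → ℝ), IsProb μ → ∀ Q Q' : X → A → ℝ,
      supQ Q ≤ fnorm / (1 - γ) → supQ Q' ≤ fnorm / (1 - γ) →
      supQ (fun x a => bell3 f p γ μ (mups Q μ) Q x a - bell3 f p γ μ (mups Q' μ) Q' x a)
        ≤ k * supQ (fun x a => Q x a - Q' x a) := by
    intro μ hμ Q Q' hQ hQ'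
    obtain ⟨hν, -⟩ := hmups Q μ hμ
    obtain ⟨hν', -⟩ := hmups Q' μ hμ
    set ν := mups Q μ
    set ν' := mups Q' μ
    set d := supQ (fun x a => Q x a - Q' x a) with hd
    have hd0 : 0 ≤ d := supQ_nonneg _
    set G := l1 (fun y => ν y - ν' y) with hG
    have hGb : G ≤ φ * (Fintype.card A : ℝ) * d / ((Fintype.card X : ℝ) * cmin - Lploc) :=
      Gbound μ hμ Q Q'
    rw [supQ_le_iff]
    intro x a
    set R := fnorm / (1 - γ) with hR
    have hS : (∑ x', p x a μ ν x' * minRow (Q x')) - (∑ x', p x a μ ν' x' * minRow (Q' x'))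
        = (∑ x', p x a μ ν x' * (minRow (Q x') - minRow (Q' x')))
          + ∑ x', (p x a μ ν x' - p x a μ ν' x') * minRow (Q' x') := by
      rw [← Finset.sum_add_distrib, ← Finset.sum_sub_distrib]
      exact Finset.sum_congr rfl fun x' _ => by ring
    have hT1 : |∑ x', p x a μ ν x' * (minRow (Q x') - minRow (Q' x'))| ≤ d := by
      refine (Finset.abs_sum_le_sum_abs _ _).trans ?_
      calc ∑ x', |p x a μ ν x' * (minRow (Q x') - minRow (Q' x'))|
          ≤ ∑ x', p x a μ ν x' * d := by
            refine Finset.sum_le_sum fun x' _ => ?_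
            rw [abs_mul, abs_of_nonneg (hp0 x a μ ν x' hμ hν)]
            refine mul_le_mul_of_nonneg_left ?_ (hp0 x a μ ν x' hμ hν)
            exact abs_minRow_sub_le _ _ d fun a' =>
              abs_le_supQ (fun x a => Q x a - Q' x a) x' a'
        _ = d := by rw [← Finset.sum_mul, hp1 x a μ ν hμ hν, one_mul]
    have hT2 : |∑ x', (p x a μ ν x' - p x a μ ν' x') * minRow (Q' x')| ≤ Lploc * G * R := by
      refine (Finset.abs_sum_le_sum_abs _ _).trans ?_
      calc ∑ x', |(p x a μ ν x' - p x a μ ν' x') * minRow (Q' x')|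
          ≤ ∑ x', |p x a μ ν x' - p x a μ ν' x'| * R := by
            refine Finset.sum_le_sum fun x' _ => ?_
            rw [abs_mul]
            refine mul_le_mul_of_nonneg_left ?_ (abs_nonneg _)
            exact abs_minRow_le _ _ fun a' => (abs_le_supQ Q' x' a').trans hQ'
        _ = (∑ x', |p x a μ ν x' - p x a μ ν' x'|) * R := (Finset.sum_mul _ _ _).symm
        _ ≤ Lploc * G * R :=
            mul_le_mul_of_nonneg_right (hLploc x a μ ν ν' hμ hν hν') hR0
    have hTf : |f x a μ ν - f x a μ ν'| ≤ Lfloc * G := hLfloc x a μ ν ν' hμ hν hν'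
    have hmain : |bell3 f p γ μ ν Q x a - bell3 f p γ μ ν' Q' x a|
        ≤ Lfloc * G + γ * (d + Lploc * G * R) := by
      have hexpand : bell3 f p γ μ ν Q x a - bell3 f p γ μ ν' Q' x a
          = (f x a μ ν - f x a μ ν')
            + γ * ((∑ x', p x a μ ν x' * (minRow (Q x') - minRow (Q' x')))
              + ∑ x', (p x a μ ν x' - p x a μ ν' x') * minRow (Q' x')) := by
        rw [← hS, bell3, bell3]; ring
      rw [hexpand]
      calc |(f x a μ ν - f x a μ ν')
            + γ * ((∑ x', p x a μ ν x' * (minRow (Q x') - minRow (Q' x')))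
              + ∑ x', (p x a μ ν x' - p x a μ ν' x') * minRow (Q' x'))|
          ≤ |f x a μ ν - f x a μ ν'|
            + γ * |(∑ x', p x a μ ν x' * (minRow (Q x') - minRow (Q' x')))
              + ∑ x', (p x a μ ν x' - p x a μ ν' x') * minRow (Q' x')| := by
            refine (abs_add_le _ _).trans ?_
            rw [abs_mul, abs_of_pos hγ0]
        _ ≤ Lfloc * G + γ * (d + Lploc * G * R) := by
            refine add_le_add hTf (mul_le_mul_of_nonneg_left ?_ hγ0.le)
            exact (abs_add_le _ _).trans (add_le_add hT1 hT2)
    have hcG : Lfloc * G + γ * (Lploc * G * R)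
        = (Lfloc + γ / (1 - γ) * Lploc * fnorm) * G := by
      rw [hR]; field_simp
    have hfinal : (Lfloc + γ / (1 - γ) * Lploc * fnorm) * G ≤ (k - γ) * d := by
      have h1 : (Lfloc + γ / (1 - γ) * Lploc * fnorm) * G
          ≤ (Lfloc + γ / (1 - γ) * Lploc * fnorm)
            * (φ * (Fintype.card A : ℝ) * d / ((Fintype.card X : ℝ) * cmin - Lploc)) :=
        mul_le_mul_of_nonneg_left hGb hc0
      have h2 : (Lfloc + γ / (1 - γ) * Lploc * fnorm)
            * (φ * (Fintype.card A : ℝ) * d / ((Fintype.card X : ℝ) * cmin - Lploc))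
          = (k - γ) * d := by
        rw [hkdef]; ring
      linarith
    calc |bell3 f p γ μ ν Q x a - bell3 f p γ μ ν' Q' x a|
        ≤ Lfloc * G + γ * (d + Lploc * G * R) := hmain
      _ = γ * d + (Lfloc * G + γ * (Lploc * G * R)) := by ring
      _ = γ * d + (Lfloc + γ / (1 - γ) * Lploc * fnorm) * G := by rw [hcG]
      _ ≤ γ * d + (k - γ) * d := by linarith
      _ = k * d := by ring
  refine ⟨part1, part2, hk1, ?_⟩
  -- Part 4 : existence and uniqueness of the fixed point, via Banach on the closed ball
  intro μ hμ
  set R := fnorm / (1 - γ) with hR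
  set S : Set (X → A → ℝ) := {Q | supQ Q ≤ R} with hSdef
  have hSclosed : IsClosed S := by
    have hSeq : S = ⋂ (xa : X × A), {Q : X → A → ℝ | |Q xa.1 xa.2| ≤ R} := by
      ext Q
      simp only [hSdef, Set.mem_setOf_eq, Set.mem_iInter, supQ_le_iff]
      exact ⟨fun h xa => h xa.1 xa.2, fun h x a => h (x, a)⟩
    rw [hSeq]
    refine isClosed_iInter fun xa => ?_
    exact isClosed_le (Continuous.abs ((continuous_apply xa.2).comp (continuous_apply xa.1)))
      continuous_const
  haveI : CompleteSpace S := hSclosed.completeSpace_coe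
  haveI : Nonempty S := ⟨⟨fun _ _ => 0, by
    show supQ (fun (_ : X) (_ : A) => (0:ℝ)) ≤ R
    rw [supQ_le_iff]; intro x a; simpa using hR0⟩⟩
  have hdist : ∀ Q Q' : X → A → ℝ, dist Q Q' = supQ (fun x a => Q x a - Q' x a) := by
    intro Q Q'
    apply le_antisymm
    · rw [dist_pi_le_iff (supQ_nonneg _)]
      intro x
      rw [dist_pi_le_iff (supQ_nonneg _)]
      intro a
      rw [Real.dist_eq]
      exact abs_le_supQ (fun x a => Q x a - Q' x a) x a
    · rw [supQ_le_iff]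
      intro x a
      calc |Q x a - Q' x a| = dist (Q x a) (Q' x a) := (Real.dist_eq _ _).symm
        _ ≤ dist (Q x) (Q' x) := dist_le_pi_dist _ _ a
        _ ≤ dist Q Q' := dist_le_pi_dist _ _ x
  set T : S → S := fun Qh => ⟨bell3 f p γ μ (mups Qh.1 μ) Qh.1, part1 μ hμ Qh.1 Qh.2⟩ with hT
  set K : NNReal := ⟨k, hk0⟩ with hK
  have hcw : ContractingWith K T := by
    constructor
    · exact_mod_cast hk1
    · refine LipschitzWith.of_dist_le_mul fun u v => ?_
      rw [Subtype.dist_eq, Subtype.dist_eq, hdist, hdist]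
      exact part2 μ hμ u.1 v.1 u.2 v.2
  set Qs := ContractingWith.fixedPoint T hcw with hQs
  have hfixQ : T Qs = Qs := hcw.fixedPoint_isFixedPt
  have hfixval : bell3 f p γ μ (mups Qs.1 μ) Qs.1 = Qs.1 := congrArg Subtype.val hfixQ
  refine ⟨Qs.1, ⟨Qs.2, hfixval⟩, ?_⟩
  intro Q1 ⟨hQ1b, hQ1fix⟩
  have hdiff := part2 μ hμ Q1 Qs.1 hQ1b Qs.2
  have heq : (fun x a => bell3 f p γ μ (mups Q1 μ) Q1 x a
      - bell3 f p γ μ (mups Qs.1 μ) Qs.1 x a) = fun x a => Q1 x a - Qs.1 x a := by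
    simp only [hQ1fix, hfixval]
  rw [heq] at hdiff
  have h0 : 0 ≤ supQ (fun x a => Q1 x a - Qs.1 x a) := supQ_nonneg _
  have hzero : supQ (fun x a => Q1 x a - Qs.1 x a) ≤ 0 := by nlinarith
  funext x a
  have := (abs_le_supQ (fun x a => Q1 x a - Qs.1 x a) x a).trans hzero
  have : |Q1 x a - Qs.1 x a| = 0 := le_antisymm this (abs_nonneg _)
  have := abs_eq_zero.1 this
  linarith [sub_eq_zero.1 this, le_of_eq (sub_eq_zero.1 this)]
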